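/- In the free nilpotent group N_{r,c} of class c, for any iterated commutators s of weight k and t of weight l with k + l ≤ c built from the generators, the identity ts = st·u holds, where u is a product of iterated commutators of the generators of weight at least k + l, and the length of u is bounded by a constant C₀ depending only on c (not on r). -/

import Mathlib

/-- The free nilpotent group of rank `r` and class `c`. -/
def FreeNilpotent (r c : ℕ) : Type :=
  FreeGroup (Fin r) ⧸ (⊤ : Subgroup (FreeGroup (Fin r))).lowerCentralSeries c

noncomputable instance (r c : ℕ) : Group (FreeNilpotent r c) :=
  QuotientGroup.Quotient.group _

/-- The canonical projection from the free group to the free nilpotent group. -/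
def freeNilpotentMk (r c : ℕ) : FreeGroup (Fin r) →* FreeNilpotent r c :=
  QuotientGroup.mk' _

open scoped commutatorElement

/-- `iterCommSet f w` is the set of iterated commutators of weight `w` of the
elements `f i`: weight `1` commutators are the `f i` and their inverses, and weight
`w+1` commutators are `[s, f i^{±1}]^{±1}` with `s` of weight `w`. -/
def iterCommSet {H : Type*} [Group H] {k : ℕ} (f : Fin k → H) : ℕ → Set H
  | 0 => ∅
  | 1 => {h | ∃ i, h = f i ∨ h = (f i)⁻¹}
  | (w + 2) => {h | ∃ s ∈ iterCommSet f (w + 1), ∃ i,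
      h = ⁅s, f i⁆ ∨ h = ⁅s, (f i)⁻¹⁆ ∨ h = ⁅s, f i⁆⁻¹ ∨ h = ⁅s, (f i)⁻¹⁆⁻¹}



section ICDev
set_option linter.unusedVariables false
set_option linter.unreachableTactic false
set_option linter.unusedTactic false
set_option linter.unusedSectionVars false

namespace ICAux

variable {G : Type*} [Group G] {n : ℕ} {f : Fin n → G}

local notation "IC" => iterCommSet

lemma IC_inv_mem : ∀ {w : ℕ} {u : G}, u ∈ IC f w → u⁻¹ ∈ IC f w
  | 0, _, hu => hu.elim
  | 1, _, ⟨i, hi⟩ => ⟨i, by rcases hi with h | h <;> subst h <;> simp⟩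
  | (w+2), _, ⟨s, hs, i, hi⟩ => ⟨s, hs, i, by
      rcases hi with h | h | h | h <;> subst h <;> simp <;> tauto⟩

lemma IC_one_pos {w : ℕ} {u : G} (hu : u ∈ IC f w) : 1 ≤ w := by
  cases w with
  | zero => exact hu.elim
  | succ w => omega

lemma comm_gen_mem {w : ℕ} {u a : G} (hu : u ∈ IC f w) (ha : a ∈ IC f 1) :
    ⁅u, a⁆ ∈ IC f (w + 1) := by
  have hw := IC_one_pos hu
  obtain ⟨v, rfl⟩ : ∃ v, w = v + 1 := ⟨w - 1, by omega⟩
  obtain ⟨i, hi⟩ := ha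
  exact ⟨u, hu, i, by rcases hi with h | h <;> subst h <;> tauto⟩

/-- the union of iterated commutator sets of weight at least `m`. -/
def ICU (f : Fin n → G) (m : ℕ) : Set G := {u | ∃ w, m ≤ w ∧ u ∈ IC f w}

/-- the subgroup generated by iterated commutators of weight at least `m`. -/
def K (f : Fin n → G) (m : ℕ) : Subgroup G := Subgroup.closure (ICU f m)

lemma mem_K_of_IC {w m : ℕ} {u : G} (h : m ≤ w) (hu : u ∈ IC f w) : u ∈ K f m :=
  Subgroup.subset_closure ⟨w, h, hu⟩

lemma K_antitone {m m' : ℕ} (h : m ≤ m') : K f m' ≤ K f m :=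
  Subgroup.closure_mono fun u ⟨w, hw, hu⟩ => ⟨w, le_trans h hw, hu⟩

variable (hgen : Subgroup.closure (Set.range f) = ⊤)

include hgen

lemma conj_gen_K_mem {m : ℕ} {a : G} (ha : a ∈ IC f 1) {u : G} (hu : u ∈ K f m) :
    a * u * a⁻¹ ∈ K f m := by
  have hmap : Subgroup.map (MulAut.conj a).toMonoidHom (K f m) ≤ K f m := by
    rw [K, MonoidHom.map_closure]
    apply Subgroup.closure_le _|>.2
    rintro x ⟨v, ⟨w, hw, hv⟩, rfl⟩
    have h1 : v⁻¹ ∈ IC f w := IC_inv_mem hv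
    have h2 : ⁅v⁻¹, a⁆ ∈ IC f (w + 1) := comm_gen_mem h1 ha
    have : (MulAut.conj a).toMonoidHom v = v * ⁅v⁻¹, a⁆ := by
      simp [MulAut.conj, commutatorElement_def]; group
    rw [this]
    exact mul_mem (mem_K_of_IC hw hv) (mem_K_of_IC (by omega) h2)
  exact hmap ⟨u, hu, rfl⟩

lemma K_normal (m : ℕ) : (K f m).Normal := by
  rw [← Subgroup.normalizer_eq_top_iff, eq_top_iff, ← hgen]
  apply Subgroup.closure_le _|>.2
  rintro x ⟨i, rfl⟩
  rw [SetLike.mem_coe, Subgroup.mem_normalizer_iff]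
  intro h
  constructor
  · intro hh; exact conj_gen_K_mem hgen ⟨i, Or.inl rfl⟩ hh
  · intro hh
    have := conj_gen_K_mem hgen ⟨i, Or.inr rfl⟩ hh
    simpa [mul_assoc] using this

/-- Lift of an elementwise commutator estimate to the subgroup `K f p` on the left. -/
lemma comm_K_left {p q : ℕ} {t : G}
    (hel : ∀ w, p ≤ w → ∀ s ∈ IC f w, ⁅s, t⁆ ∈ K f (p + q)) :
    ∀ x ∈ K f p, ⁅x, t⁆ ∈ K f (p + q) := by
  haveI hN : (K f (p + q)).Normal := K_normal hgen _
  let P : Subgroup G :=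
    { carrier := {x | ⁅x, t⁆ ∈ K f (p + q)}
      one_mem' := by
        show ⁅(1 : G), t⁆ ∈ K f (p + q)
        simpa using one_mem (K f (p + q))
      mul_mem' := by
        intro x y hx hy
        show ⁅x * y, t⁆ ∈ K f (p + q)
        have hid : ⁅x * y, t⁆ = (x * ⁅y, t⁆ * x⁻¹) * ⁅x, t⁆ := by
          simp only [commutatorElement_def]; group
        rw [hid]
        exact mul_mem (hN.conj_mem _ hy x) hx
      inv_mem' := by
        intro x hx
        show ⁅x⁻¹, t⁆ ∈ K f (p + q)
        have hid : ⁅x⁻¹, t⁆ = x⁻¹ * ⁅x, t⁆⁻¹ * x := by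
          simp only [commutatorElement_def]; group
        rw [hid]
        simpa using hN.conj_mem _ (inv_mem hx) x⁻¹ }
  intro x hx
  have hPle : K f p ≤ P := by
    apply Subgroup.closure_le P |>.2
    rintro u ⟨w, hw, hu⟩
    exact hel w hw u hu
  exact hPle hx

omit hgen in
lemma conj_comm_eq (X g Y : G) : ⁅X, g * Y * g⁻¹⁆ = g * ⁅g⁻¹ * X * g, Y⁆ * g⁻¹ := by
  simp only [commutatorElement_def]; group

omit hgen in
lemma hw_identity (s t b : G) :
    ⁅⁅t, b⁆, s⁆ = ⁅⁅b⁻¹ * s * b, t⁆, t * b * t⁻¹⁆⁻¹ *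
      ⁅⁅s, b⁻¹⁆, (b⁻¹ * s * b) * t * (b⁻¹ * s * b)⁻¹⁆⁻¹ := by
  simp only [commutatorElement_def]; group

theorem comm_IC_mem :
    ∀ l k : ℕ, 1 ≤ k → ∀ s ∈ IC f k, ∀ t ∈ IC f l, ⁅s, t⁆ ∈ K f (k + l) := by
  intro l
  induction l using Nat.strong_induction_on with
  | _ l IH =>
  match l with
  | 0 => exact fun k hk s hs t ht => ht.elim
  | 1 => exact fun k hk s hs t ht => mem_K_of_IC le_rfl (comm_gen_mem hs ht)
  | (w+2) =>
    intro k hk s hs t ht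
    haveI hN : (K f (k + (w+2))).Normal := K_normal hgen _
    have IHel : ∀ k', 1 ≤ k' → ∀ s' ∈ IC f k', ∀ t' ∈ IC f (w+1),
        ⁅s', t'⁆ ∈ K f (k' + (w+1)) :=
      fun k' hk' s' hs' t' ht' => IH (w+1) (by omega) k' hk' s' hs' t' ht'
    have IHK : ∀ p, 1 ≤ p → ∀ x ∈ K f p, ∀ t' ∈ IC f (w+1),
        ⁅x, t'⁆ ∈ K f (p + (w+1)) := by
      intro p hp x hx t' ht'
      refine comm_K_left hgen (q := w+1) (fun w' hw' s' hs' => ?_) x hx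
      exact K_antitone (by omega) (IHel w' (le_trans hp hw') s' hs' t' ht')
    have IHK1 : ∀ p, 1 ≤ p → ∀ x ∈ K f p, ∀ a ∈ IC f 1, ⁅x, a⁆ ∈ K f (p + 1) := by
      intro p hp x hx a ha
      refine comm_K_left hgen (q := 1) (fun w' hw' s' hs' => ?_) x hx
      exact K_antitone (by omega) (mem_K_of_IC le_rfl (comm_gen_mem hs' ha))
    have core : ∀ t' ∈ IC f (w+1), ∀ b ∈ IC f 1, ⁅⁅t', b⁆, s⁆ ∈ K f (k + (w+2)) := by
      intro t' ht' b hb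
      rw [hw_identity]
      have hx3 : b⁻¹ * s * b ∈ K f k := by
        simpa [mul_assoc] using
          (K_normal hgen k).conj_mem s (mem_K_of_IC le_rfl hs) b⁻¹
      have h3i : ⁅b⁻¹*s*b, t'⁆ ∈ K f (k + (w+1)) := IHK k hk _ hx3 t' ht'
      have h3 : ⁅⁅b⁻¹*s*b, t'⁆, t' * b * t'⁻¹⁆ ∈ K f (k + (w+2)) := by
        rw [conj_comm_eq]
        have hy : t'⁻¹ * ⁅b⁻¹*s*b, t'⁆ * t' ∈ K f (k + (w+1)) := by
          simpa [mul_assoc] using (K_normal hgen _).conj_mem _ h3i t'⁻¹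
        have h2' := IHK1 (k + (w+1)) (by omega) _ hy b hb
        exact hN.conj_mem _ h2' t'
      have hb' : b⁻¹ ∈ IC f 1 := IC_inv_mem hb
      have h2i : ⁅s, b⁻¹⁆ ∈ IC f (k + 1) := comm_gen_mem hs hb'
      have h2 : ⁅⁅s,b⁻¹⁆, (b⁻¹*s*b) * t' * (b⁻¹*s*b)⁻¹⁆ ∈ K f (k + (w+2)) := by
        rw [conj_comm_eq]
        have hy : (b⁻¹*s*b)⁻¹ * ⁅s,b⁻¹⁆ * (b⁻¹*s*b) ∈ K f (k+1) := by
          simpa [mul_assoc] using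
            (K_normal hgen _).conj_mem _ (mem_K_of_IC le_rfl h2i) (b⁻¹*s*b)⁻¹
        have h2' := IHK (k+1) (by omega) _ hy t' ht'
        have harith : (k+1) + (w+1) = k + (w+2) := by omega
        rw [harith] at h2'
        exact hN.conj_mem _ h2' (b⁻¹*s*b)
      exact mul_mem (inv_mem h3) (inv_mem h2)
    obtain ⟨t', ht', i, hi⟩ := ht
    have hfi : f i ∈ IC f 1 := ⟨i, Or.inl rfl⟩
    have hfi' : (f i)⁻¹ ∈ IC f 1 := ⟨i, Or.inr rfl⟩
    have main : ∀ b ∈ IC f 1, ⁅s, ⁅t', b⁆⁆ ∈ K f (k+(w+2)) := by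
      intro b hb
      have hrw : ⁅s, ⁅t',b⁆⁆ = ⁅⁅t',b⁆, s⁆⁻¹ := (commutatorElement_inv _ _).symm
      rw [hrw]
      exact inv_mem (core t' ht' b hb)
    have main_inv : ∀ b ∈ IC f 1, ⁅s, ⁅t', b⁆⁻¹⁆ ∈ K f (k+(w+2)) := by
      intro b hb
      have hid : ⁅s, ⁅t',b⁆⁻¹⁆ = ⁅t',b⁆⁻¹ * ⁅s, ⁅t',b⁆⁆⁻¹ * ⁅t',b⁆ := by
        simp only [commutatorElement_def]; group
      rw [hid]
      simpa [mul_assoc] using hN.conj_mem _ (inv_mem (main b hb)) ⁅t',b⁆⁻¹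
    rcases hi with h|h|h|h <;> subst h
    · exact main _ hfi
    · exact main _ hfi'
    · exact main_inv _ hfi
    · exact main_inv _ hfi'


omit hgen

lemma IC_finite : ∀ w : ℕ, (iterCommSet f w).Finite
  | 0 => Set.finite_empty
  | 1 => Set.Finite.subset ((Set.finite_range f).union
      (Set.finite_range fun i => (f i)⁻¹)) (by
        rintro u ⟨i, h | h⟩
        · exact Or.inl ⟨i, h.symm⟩
        · exact Or.inr ⟨i, h.symm⟩)
  | (w+2) => by
    have IH := IC_finite (w+1)
    have hfin : ∀ s : G, (⋃ i : Fin n,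
        ({⁅s, f i⁆, ⁅s, (f i)⁻¹⁆, ⁅s, f i⁆⁻¹, ⁅s, (f i)⁻¹⁆⁻¹} : Set G)).Finite :=
      fun s => Set.finite_iUnion fun i => (Set.finite_singleton _).insert _ |>.insert _ |>.insert _
    refine Set.Finite.subset (IH.biUnion fun s _ => hfin s) ?_
    rintro u ⟨s, hs, i, hi⟩
    exact Set.mem_biUnion hs (by rcases hi with h|h|h|h <;> subst h <;> simp [Set.mem_iUnion] <;> exact ⟨i, by tauto⟩)

lemma IC_map {H : Type*} [Group H] (φ : G →* H) :
    ∀ {w : ℕ} {u : G}, u ∈ iterCommSet f w → φ u ∈ iterCommSet (φ ∘ f) w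
  | 0, _, hu => hu.elim
  | 1, _, ⟨i, hi⟩ => ⟨i, by rcases hi with h | h <;> subst h <;> simp⟩
  | (w+2), _, ⟨s, hs, i, hi⟩ => ⟨φ s, IC_map φ hs, i, by
      rcases hi with h | h | h | h <;> subst h <;>
        simp [map_commutatorElement] <;> tauto⟩

lemma IC_comp_subset {m : ℕ} (e : Fin m → Fin n) :
    ∀ {w : ℕ} {u : G}, u ∈ iterCommSet (f ∘ e) w → u ∈ iterCommSet f w
  | 0, _, hu => hu.elim
  | 1, _, ⟨i, hi⟩ => ⟨e i, hi⟩
  | (w+2), _, ⟨s, hs, i, hi⟩ => ⟨s, IC_comp_subset e hs, e i, hi⟩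

lemma IC_lift {H : Type*} [Group H] (φ : G →* H) :
    ∀ {w : ℕ} {u : H}, u ∈ iterCommSet ((φ : G → H) ∘ f) w →
      ∃ v ∈ iterCommSet f w, φ v = u
  | 0, _, hu => hu.elim
  | 1, _, ⟨i, hi⟩ => by
      rcases hi with h | h
      · exact ⟨f i, ⟨i, Or.inl rfl⟩, h.symm⟩
      · exact ⟨(f i)⁻¹, ⟨i, Or.inr rfl⟩, by rw [map_inv]; exact h.symm⟩
  | (w+2), _, ⟨s, hs, i, hi⟩ => by
      obtain ⟨v, hv, rfl⟩ := IC_lift φ (w := w+1) hs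
      rcases hi with h | h | h | h <;> subst h
      · exact ⟨⁅v, f i⁆, ⟨v, hv, i, by tauto⟩, by simp [map_commutatorElement]⟩
      · exact ⟨⁅v, (f i)⁻¹⁆, ⟨v, hv, i, by tauto⟩, by simp [map_commutatorElement]⟩
      · exact ⟨⁅v, f i⁆⁻¹, ⟨v, hv, i, by tauto⟩, by simp [map_commutatorElement]⟩
      · exact ⟨⁅v, (f i)⁻¹⁆⁻¹, ⟨v, hv, i, by tauto⟩, by simp [map_commutatorElement]⟩

lemma IC_restrict :
    ∀ {w : ℕ} {s : G}, s ∈ iterCommSet f w → ∃ ι : Fin w → Fin n, s ∈ iterCommSet (f ∘ ι) w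
  | 0, _, hu => hu.elim
  | 1, _, ⟨i, hi⟩ => ⟨fun _ => i, ⟨0, hi⟩⟩
  | (w+2), _, ⟨s', hs', i, hi⟩ => by
      obtain ⟨ι', hι'⟩ := IC_restrict (w := w+1) hs'
      refine ⟨Fin.snoc ι' i, ?_⟩
      have hcomp : f ∘ ι' = (f ∘ Fin.snoc ι' i) ∘ Fin.castSucc := by
        funext j; simp [Fin.snoc_castSucc]
      rw [hcomp] at hι'
      have hmem : s' ∈ iterCommSet (f ∘ Fin.snoc ι' i) (w+1) := IC_comp_subset _ hι'
      have hlast : f i = (f ∘ Fin.snoc ι' i) (Fin.last (w+1)) := by simp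
      rw [hlast] at hi
      exact ⟨s', hmem, Fin.last (w+1), hi⟩

lemma IC_nonempty_index {w : ℕ} {s : G} (hw : 1 ≤ w) (hs : s ∈ iterCommSet f w) :
    Nonempty (Fin n) := by
  match w, hs with
  | 1, ⟨i, _⟩ => exact ⟨i⟩
  | (w+2), ⟨_, _, i, _⟩ => exact ⟨i⟩

lemma exists_list_K {m : ℕ} {u : G} (hu : u ∈ K f m) :
    ∃ L : List G, (∀ y ∈ L, ∃ w, m ≤ w ∧ y ∈ iterCommSet f w) ∧ L.prod = u := by
  have hsymm : ICU f m ∪ (ICU f m)⁻¹ = ICU f m := by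
    apply Set.union_eq_self_of_subset_right
    rintro x hx
    obtain ⟨w, hw, hxw⟩ := Set.mem_inv.mp hx
    exact ⟨w, hw, by simpa using IC_inv_mem hxw⟩
  have hu' : u ∈ Submonoid.closure (ICU f m) := by
    have h1 : u ∈ (Subgroup.closure (ICU f m)).toSubmonoid := hu
    rw [Subgroup.closure_toSubmonoid, hsymm] at h1
    exact h1
  obtain ⟨L, hL, hprod⟩ := Submonoid.exists_list_of_mem_closure hu'
  exact ⟨L, fun y hy => hL y hy, hprod⟩

end ICAux

section Assembly
open ICAux

lemma exists_uniform_bound' {α β : Type*} {A : Set α} (hA : A.Finite)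
    (P : α → List β → Prop) (h : ∀ a ∈ A, ∃ L, P a L) :
    ∃ C : ℕ, ∀ a ∈ A, ∃ L, L.length ≤ C ∧ P a L := by
  classical
  choose F hF using h
  refine ⟨hA.toFinset.sup (fun a => if ha : a ∈ A then (F a ha).length else 0),
    fun a ha => ⟨F a ha, ?_, hF a ha⟩⟩
  have h1 := Finset.le_sup (f := fun a => if ha : a ∈ A then (F a ha).length else 0)
    (hA.mem_toFinset.mpr ha)
  simpa [dif_pos ha] using h1

lemma freeNilpotent_gen (r c : ℕ) :
    Subgroup.closure (Set.range fun i => freeNilpotentMk r c (FreeGroup.of i)) = ⊤ := by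
  have h1 : (Set.range fun i => freeNilpotentMk r c (FreeGroup.of i))
      = (freeNilpotentMk r c) '' (Set.range FreeGroup.of) := by
    rw [← Set.range_comp]; rfl
  rw [h1, ← MonoidHom.map_closure, FreeGroup.closure_range_of]
  exact Subgroup.map_top_of_surjective _ (QuotientGroup.mk'_surjective _)

lemma model_exists {c : ℕ} (r : ℕ) {k l : ℕ} (hk : 1 ≤ k) (hl : 1 ≤ l)
    {s t : FreeNilpotent r c}
    (hs : s ∈ iterCommSet (fun i => freeNilpotentMk r c (FreeGroup.of i)) k)
    (ht : t ∈ iterCommSet (fun i => freeNilpotentMk r c (FreeGroup.of i)) l) :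
    ∃ L : List (FreeNilpotent r c),
      (∀ u ∈ L, ∃ w, k + l ≤ w ∧
        u ∈ iterCommSet (fun i => freeNilpotentMk r c (FreeGroup.of i)) w) ∧
      t * s = s * t * L.prod := by
  have hgen := freeNilpotent_gen r c
  have h1 := comm_IC_mem hgen k l hl t⁻¹ (IC_inv_mem ht) s⁻¹ (IC_inv_mem hs)
  rw [Nat.add_comm l k] at h1
  obtain ⟨L, hL, hprod⟩ := exists_list_K h1
  refine ⟨L, hL, ?_⟩
  rw [hprod]
  simp only [commutatorElement_def]
  group

lemma model_bound (c : ℕ) :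
    ∃ C₀ : ℕ, ∀ k l : ℕ, 1 ≤ k → 1 ≤ l → k + l ≤ c →
      ∀ s t : FreeNilpotent c c,
        s ∈ iterCommSet (fun i => freeNilpotentMk c c (FreeGroup.of i)) k →
        t ∈ iterCommSet (fun i => freeNilpotentMk c c (FreeGroup.of i)) l →
        ∃ L : List (FreeNilpotent c c), L.length ≤ C₀ ∧
          (∀ u ∈ L, ∃ w, k + l ≤ w ∧
            u ∈ iterCommSet (fun i => freeNilpotentMk c c (FreeGroup.of i)) w) ∧
          t * s = s * t * L.prod := by
  classical
  set g : Fin c → FreeNilpotent c c := fun i => freeNilpotentMk c c (FreeGroup.of i) with hg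
  set A : Set (ℕ × ℕ × FreeNilpotent c c × FreeNilpotent c c) :=
    {p | 1 ≤ p.1 ∧ 1 ≤ p.2.1 ∧ p.1 + p.2.1 ≤ c ∧
      p.2.2.1 ∈ iterCommSet g p.1 ∧ p.2.2.2 ∈ iterCommSet g p.2.1} with hAdef
  have hU : (⋃ w ∈ Set.Iic c, iterCommSet g w).Finite :=
    (Set.finite_Iic c).biUnion (fun w _ => IC_finite w)
  have hA : A.Finite := by
    apply Set.Finite.subset ((Set.finite_Iic c).prod ((Set.finite_Iic c).prod (hU.prod hU)))
    rintro ⟨k, l, s, t⟩ ⟨hk, hl, hkl, hs, ht⟩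
    dsimp only at hk hl hkl hs ht
    refine ⟨by simp; omega, by simp; omega,
      Set.mem_biUnion (by simp; omega) hs, Set.mem_biUnion (by simp; omega) ht⟩
  have h := exists_uniform_bound' hA
    (fun p L => (∀ u ∈ L, ∃ w, p.1 + p.2.1 ≤ w ∧ u ∈ iterCommSet g w) ∧
      p.2.2.2 * p.2.2.1 = p.2.2.1 * p.2.2.2 * L.prod)
    (by rintro ⟨k, l, s, t⟩ ⟨hk, hl, hkl, hs, ht⟩
        dsimp only at hk hl hkl hs ht ⊢
        exact model_exists c hk hl hs ht)
  obtain ⟨C₀, hC₀⟩ := h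
  refine ⟨C₀, fun k l hk hl hkl s t hs ht => ?_⟩
  obtain ⟨L, hlen, hmem, hid⟩ := hC₀ (k, l, s, t) ⟨hk, hl, hkl, hs, ht⟩
  exact ⟨L, hlen, hmem, hid⟩

end Assembly


end ICDev

open ICAux in
/-- The commutation identity `ts = st·u` in free nilpotent groups of class `c`:
for iterated commutators `s` of weight `k` and `t` of weight `l` with `k + l ≤ c`,
`u` is a product of at most `C₀` iterated commutators of weight at least `k + l`,
where the constant `C₀` depends only on `c` and not on the rank `r`. -/
theorem commutation_identity_uniform_bound (c : ℕ) :
    ∃ C₀ : ℕ, ∀ (r k l : ℕ), 1 ≤ k → 1 ≤ l → k + l ≤ c →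
      ∀ s t : FreeNilpotent r c,
        s ∈ iterCommSet (fun i => freeNilpotentMk r c (FreeGroup.of i)) k →
        t ∈ iterCommSet (fun i => freeNilpotentMk r c (FreeGroup.of i)) l →
        ∃ L : List (FreeNilpotent r c), L.length ≤ C₀ ∧
          (∀ u ∈ L, ∃ w, k + l ≤ w ∧
            u ∈ iterCommSet (fun i => freeNilpotentMk r c (FreeGroup.of i)) w) ∧
          t * s = s * t * L.prod := by
  classical
  obtain ⟨C₀, hC₀⟩ := model_bound c
  refine ⟨C₀, ?_⟩
  intro r k l hk hl hkl s t hs ht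
  set f : Fin r → FreeNilpotent r c := fun i => freeNilpotentMk r c (FreeGroup.of i) with hf
  have hne : Nonempty (Fin r) := IC_nonempty_index hk hs
  obtain ⟨ιs, hιs⟩ := IC_restrict hs
  obtain ⟨ιt, hιt⟩ := IC_restrict ht
  have hkc : k ≤ c := by omega
  set σ : Fin c → Fin r := fun m =>
    if h : (m : ℕ) < k then ιs ⟨m, h⟩
    else if h' : (m : ℕ) - k < l then ιt ⟨(m : ℕ) - k, h'⟩ else hne.some with hσ
  set φ : FreeGroup (Fin c) →* FreeGroup (Fin r) :=
    FreeGroup.lift (fun j => FreeGroup.of (σ j)) with hφ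
  have hφcond : (⊤ : Subgroup (FreeGroup (Fin c))).lowerCentralSeries c ≤
      ((⊤ : Subgroup (FreeGroup (Fin r))).lowerCentralSeries c).comap φ :=
    Subgroup.map_le_iff_le_comap.mp (lowerCentralSeries.map φ c)
  set φbar : FreeNilpotent c c →* FreeNilpotent r c :=
    QuotientGroup.map _ _ φ hφcond with hφbar
  set g : Fin c → FreeNilpotent c c := fun j => freeNilpotentMk c c (FreeGroup.of j) with hg
  have hcommute : ∀ j, φbar (g j) = f (σ j) := by
    intro j
    show QuotientGroup.map _ _ φ hφcond (QuotientGroup.mk' _ (FreeGroup.of j)) = _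
    rw [QuotientGroup.map_mk']
    show freeNilpotentMk r c (φ (FreeGroup.of j)) = freeNilpotentMk r c (FreeGroup.of (σ j))
    rw [hφ, FreeGroup.lift_apply_of]
  -- s side
  set es : Fin k → Fin c := fun j => ⟨j, lt_of_lt_of_le j.2 hkc⟩ with hes'
  have hes : f ∘ ιs = (φbar : FreeNilpotent c c → FreeNilpotent r c) ∘ (g ∘ es) := by
    funext j
    have h1 : σ (es j) = ιs j := by
      simp only [hσ, hes']
      rw [dif_pos (show ((⟨(j : ℕ), lt_of_lt_of_le j.2 hkc⟩ : Fin c) : ℕ) < k from j.2)]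
    simp only [Function.comp_apply, hcommute, h1]
  rw [hes] at hιs
  obtain ⟨s₀, hs₀, hφs⟩ := IC_lift φbar hιs
  have hs₀' : s₀ ∈ iterCommSet g k := IC_comp_subset _ hs₀
  -- t side
  set et : Fin l → Fin c := fun j => ⟨k + j, by omega⟩ with het'
  have het : f ∘ ιt = (φbar : FreeNilpotent c c → FreeNilpotent r c) ∘ (g ∘ et) := by
    funext j
    have h1 : σ (et j) = ιt j := by
      simp only [hσ, het']
      rw [dif_neg (by simp), dif_pos (show k + (j : ℕ) - k < l by omega)]
      congr 1
      ext
      simp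
    simp only [Function.comp_apply, hcommute, h1]
  rw [het] at hιt
  obtain ⟨t₀, ht₀, hφt⟩ := IC_lift φbar hιt
  have ht₀' : t₀ ∈ iterCommSet g l := IC_comp_subset _ ht₀
  obtain ⟨L₀, hlen, hmem, hid⟩ := hC₀ k l hk hl hkl s₀ t₀ hs₀' ht₀'
  refine ⟨L₀.map φbar, by simpa using hlen, ?_, ?_⟩
  · rintro u hu
    rw [List.mem_map] at hu
    obtain ⟨u₀, hu₀, rfl⟩ := hu
    obtain ⟨w, hw, hu₀w⟩ := hmem u₀ hu₀
    refine ⟨w, hw, ?_⟩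
    have h1 : φbar u₀ ∈ iterCommSet ((φbar : FreeNilpotent c c → FreeNilpotent r c) ∘ g) w :=
      IC_map φbar hu₀w
    have h2 : (φbar : FreeNilpotent c c → FreeNilpotent r c) ∘ g = f ∘ σ :=
      funext fun j => hcommute j
    rw [h2] at h1
    exact IC_comp_subset σ h1
  · have h3 := congrArg φbar hid
    rw [map_mul, map_mul, map_mul, hφs, hφt, map_list_prod] at h3
    exact h3
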